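/- Every noncrossing tree on vertex set [n] with at least one edge has a terminal edge, i.e., an edge {i,j} that is the furthest clockwise edge at both of its endpoints i and j. -/

import Mathlib

/-- A graph on `Fin n` (vertices drawn left to right on a line) is noncrossing if it
has no pair of edges `{a,c}` and `{b,d}` with `a < b < c < d`. -/
def Noncrossing {n : ℕ} (G : SimpleGraph (Fin n)) : Prop :=
  ∀ a b c d : Fin n, a < b → b < c → c < d → G.Adj a c → G.Adj b d → False

/-- The edge `{i,j}` (with `i < j`) is the furthest clockwise edge at vertex `i`:
in the standard drawing, the clockwise order of the edges at `i` consists of the edges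
to smaller neighbors in decreasing order followed by the edges to larger neighbors in
decreasing order, so the furthest clockwise edge at `i` goes to the smallest neighbor
larger than `i` if one exists, and otherwise to the smallest neighbor. -/
def FurthestClockwiseAt {n : ℕ} (G : SimpleGraph (Fin n)) (i j : Fin n) : Prop :=
  G.Adj i j ∧
  (if i < j then
      -- `j` is the smallest neighbor of `i` exceeding `i`
      ∀ k, G.Adj i k → i < k → j ≤ k
    else
      -- no neighbor of `i` exceeds `i`, and `j` is the smallest neighbor of `i`
      (∀ k, G.Adj i k → k < i) ∧ (∀ k, G.Adj i k → j ≤ k))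

/-- An edge is terminal if it is the furthest clockwise edge at both of its endpoints. -/
def TerminalEdge {n : ℕ} (G : SimpleGraph (Fin n)) (i j : Fin n) : Prop :=
  FurthestClockwiseAt G i j ∧ FurthestClockwiseAt G j i

private lemma concat_isPath' {V : Type*} {G : SimpleGraph V} {u v w : V} {p : G.Walk u v}
    (hp : p.IsPath) (h : G.Adj v w) (hw : w ∉ p.support) : (p.concat h).IsPath := by
  rw [← SimpleGraph.Walk.isPath_reverse_iff, SimpleGraph.Walk.reverse_concat]
  exact (hp.reverse).cons (by simpa [SimpleGraph.Walk.support_reverse] using hw)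

/-- Every noncrossing tree on `[n]` with at least one edge has a terminal edge. -/
theorem noncrossing_tree_exists_terminal_edge {n : ℕ} (T : SimpleGraph (Fin n))
    (hT : T.IsTree) (hnc : Noncrossing T) (hn : 2 ≤ n) :
    ∃ i j : Fin n, i < j ∧ TerminalEdge T i j := by
  classical
  have hn0 : 0 < n := by omega
  -- every vertex has a neighbor
  have hdeg : ∀ x : Fin n, ∃ y, T.Adj x y := by
    intro x
    have hy : ∃ y : Fin n, y ≠ x := by
      by_cases hx : x = ⟨0, hn0⟩
      · exact ⟨⟨1, by omega⟩, by simp [hx, Fin.ext_iff]⟩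
      · exact ⟨⟨0, hn0⟩, fun h => hx h.symm⟩
    obtain ⟨y, hy⟩ := hy
    obtain ⟨w⟩ := hT.isConnected.preconnected x y
    cases w with
    | nil => exact absurd rfl hy
    | cons h _ => exact ⟨_, h⟩
  -- the set of vertices all of whose neighbors are smaller
  set F : Finset (Fin n) := Finset.univ.filter (fun j => ∀ k, T.Adj j k → k < j) with hF
  have hFne : F.Nonempty := by
    refine ⟨⟨n - 1, by omega⟩, ?_⟩
    simp only [hF, Finset.mem_filter, Finset.mem_univ, true_and]
    intro k hk
    have h1 : k.val < n := k.isLt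
    have h2 : k.val ≠ n - 1 := fun h => hk.ne' (Fin.ext h)
    simp only [Fin.lt_def]
    omega
  set j : Fin n := F.min' hFne with hj
  have hjF : j ∈ F := F.min'_mem hFne
  have hjmin : ∀ x ∈ F, j ≤ x := fun x hx => F.min'_le x hx
  have hjall : ∀ k, T.Adj j k → k < j := by
    simpa only [hF, Finset.mem_filter, Finset.mem_univ, true_and] using hjF
  -- the smallest neighbor of j
  set N : Finset (Fin n) := Finset.univ.filter (fun k => T.Adj j k) with hN
  have hNne : N.Nonempty := by
    obtain ⟨y, hy⟩ := hdeg j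
    exact ⟨y, by simp [hN, hy]⟩
  set i : Fin n := N.min' hNne with hi
  have hiadj : T.Adj j i := by
    have := N.min'_mem hNne
    simpa [hN] using this
  have himin : ∀ k, T.Adj j k → i ≤ k := fun k hk => N.min'_le k (by simp [hN, hk])
  have hij : i < j := hjall i hiadj
  have hadjij : T.Adj i j := hiadj.symm
  -- Main chain argument
  have main : ∀ t : ℕ, ∀ x : Fin n, j.val - x.val ≤ t → i < x → x < j →
      (∃ p : T.Walk i x, p.IsPath ∧ ∀ v ∈ p.support, v ≤ x) → False := by
    intro t
    induction t with
    | zero =>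
      intro x ht hix hxj _
      have : x.val < j.val := hxj
      omega
    | succ t ih =>
      rintro x ht hix hxj ⟨p, hp, hsup⟩
      have hxF : x ∉ F := fun hx => absurd (hjmin x hx) (not_le.mpr hxj)
      have hex : ∃ m, T.Adj x m ∧ x < m := by
        simp only [hF, Finset.mem_filter, Finset.mem_univ, true_and, not_forall] at hxF
        obtain ⟨m, hm, hmx⟩ := hxF
        exact ⟨m, hm, lt_of_le_of_ne (not_lt.mp hmx) hm.ne⟩
      obtain ⟨m, hxm, hxm'⟩ := hex
      rcases lt_trichotomy m j with hmj | hmj | hmj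
      · -- extend the path
        have hmsup : m ∉ p.support := fun h => absurd (hsup m h) (not_le.mpr hxm')
        refine ih m ?_ (hix.trans hxm') hmj ⟨p.concat hxm, concat_isPath' hp hxm hmsup, ?_⟩
        · have h1 : x.val < m.val := hxm'
          have h2 : x.val < j.val := hxj
          omega
        · intro v hv
          rw [SimpleGraph.Walk.support_concat, List.mem_append] at hv
          rcases hv with hv | hv
          · exact le_of_lt (lt_of_le_of_lt (hsup v hv) hxm')
          · simp only [List.mem_singleton] at hv
            exact le_of_eq hv
      · -- m = j : would create a cycle
        rw [hmj] at hxm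
        have hjsup : j ∉ p.support := fun h => absurd (hsup j h) (not_le.mpr hxj)
        have hq : (p.concat hxm).IsPath := concat_isPath' hp hxm hjsup
        have huniq := hT.existsUnique_path i j
        have heq : p.concat hxm = hadjij.toWalk :=
          huniq.unique hq (by simp [SimpleGraph.Adj.toWalk,
            SimpleGraph.Walk.cons_isPath_iff, SimpleGraph.Walk.IsPath.nil, hadjij.ne])
        have hxsup : x ∈ (p.concat hxm).support := by
          rw [SimpleGraph.Walk.support_concat, List.mem_append]
          exact Or.inl p.end_mem_support
        rw [heq] at hxsup
        simp only [SimpleGraph.Adj.toWalk, SimpleGraph.Walk.support_cons,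
          SimpleGraph.Walk.support_nil, List.mem_cons, List.mem_singleton,
          List.not_mem_nil, or_false] at hxsup
        rcases hxsup with h | h
        · exact absurd h (ne_of_gt hix)
        · exact absurd h (ne_of_lt hxj)
      · -- m > j : crossing
        exact hnc i x j m hix hxj hmj hadjij hxm
  refine ⟨i, j, hij, ⟨hadjij, ?_⟩, ⟨hiadj, ?_⟩⟩
  · rw [if_pos hij]
    intro k hik hikk
    by_contra hkj
    push_neg at hkj
    refine main (j.val - k.val) k le_rfl hikk hkj
      ⟨hik.toWalk, ?_, ?_⟩
    · simp [SimpleGraph.Adj.toWalk, SimpleGraph.Walk.cons_isPath_iff,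
        SimpleGraph.Walk.IsPath.nil, hik.ne]
    · intro v hv
      simp only [SimpleGraph.Adj.toWalk, SimpleGraph.Walk.support_cons,
        SimpleGraph.Walk.support_nil, List.mem_cons, List.mem_singleton,
        List.not_mem_nil, or_false] at hv
      rcases hv with h | h
      · exact h ▸ le_of_lt hikk
      · exact le_of_eq h
  · rw [if_neg (not_lt.mpr hij.le)]
    exact ⟨hjall, himin⟩
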